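/- The area of the intersection of two disks of radii d and D (with 0 < d ≤ D) whose centers are a distance Δx apart, where |D − d| < Δx < D + d, equals d²·arccos((d² + Δx² − D²)/(2Δx·d)) + D²·arccos((D² + Δx² − d²)/(2Δx·D)) − (1/2)·√((d+Δx+D)(d+Δx−D)(D+d−Δx)(D+Δx−d)). -/

import Mathlib

open MeasureTheory Real
open intervalIntegral

set_option maxHeartbeats 1000000


lemma seg_integral (r t : ℝ) (hr : 0 < r) (h1 : -r ≤ t) (h2 : t ≤ r) :
    ∫ x in t..r, 2 * Real.sqrt (r ^ 2 - x ^ 2)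
      = r ^ 2 * Real.arccos (t / r) - t * Real.sqrt (r ^ 2 - t ^ 2) := by
  have htr1 : -1 ≤ t / r := by rw [le_div_iff₀ hr]; linarith
  have htr2 : t / r ≤ 1 := by rw [div_le_one hr]; linarith
  have hg : Continuous (fun x : ℝ => 2 * Real.sqrt (r ^ 2 - x ^ 2)) := by continuity
  have key := integral_comp_smul_deriv (a := Real.arcsin (t / r)) (b := π / 2)
      (f := fun θ => r * Real.sin θ) (f' := fun θ => r * Real.cos θ)
      (g := fun x => 2 * Real.sqrt (r ^ 2 - x ^ 2))
      (fun x _ => (Real.hasDerivAt_sin x).const_mul r) (by fun_prop) hg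
  simp only [Function.comp, Real.sin_arcsin htr1 htr2, Real.sin_pi_div_two, mul_one,
    mul_div_cancel₀ _ hr.ne'] at key
  rw [← key]
  have huIcc : Set.uIcc (Real.arcsin (t / r)) (π / 2) ⊆ Set.Icc (-(π/2)) (π/2) := by
    apply Set.uIcc_subset_Icc ⟨Real.neg_pi_div_two_le_arcsin _, Real.arcsin_le_pi_div_two _⟩
    exact ⟨by linarith [Real.pi_pos], le_refl _⟩
  have hcong : ∀ θ ∈ Set.uIcc (Real.arcsin (t / r)) (π / 2),
      (r * Real.cos θ) • (2 * Real.sqrt (r ^ 2 - (r * Real.sin θ) ^ 2))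
        = 2 * r ^ 2 * Real.cos θ ^ 2 := by
    intro θ hθ
    have hcos : 0 ≤ Real.cos θ := Real.cos_nonneg_of_mem_Icc (huIcc hθ)
    have : r ^ 2 - (r * Real.sin θ) ^ 2 = (r * Real.cos θ) ^ 2 := by
      have := Real.sin_sq_add_cos_sq θ; nlinarith
    rw [this, Real.sqrt_sq (by positivity)]
    simp only [smul_eq_mul]; ring
  rw [integral_congr hcong]
  have hsplit : (fun θ : ℝ => 2 * r ^ 2 * Real.cos θ ^ 2)
      = fun θ : ℝ => (2 * r ^ 2) * Real.cos θ ^ 2 := rfl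
  rw [hsplit, intervalIntegral.integral_const_mul, integral_cos_sq]
  rw [Real.cos_pi_div_two, Real.sin_pi_div_two, Real.cos_arcsin, Real.sin_arcsin htr1 htr2]
  have harc : Real.arccos (t / r) = π / 2 - Real.arcsin (t / r) := by rw [Real.arccos]
  have hsq : Real.sqrt (1 - (t / r) ^ 2) * r = Real.sqrt (r ^ 2 - t ^ 2) := by
    rw [show r ^ 2 - t ^ 2 = (1 - (t / r) ^ 2) * r ^ 2 by field_simp,
      Real.sqrt_mul (by nlinarith : (0:ℝ) ≤ 1 - (t / r) ^ 2), Real.sqrt_sq hr.le]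
  rw [harc]
  have hfin : r ^ 2 * (Real.sqrt (1 - (t / r) ^ 2) * (t / r)) = t * Real.sqrt (r ^ 2 - t ^ 2) := by
    rw [← hsq]; field_simp
  rw [← hfin]; ring


lemma lens_volume (d D Δx : ℝ) (hd : 0 < d) (hdD : d ≤ D)
    (h₁ : |D - d| < Δx) (h₂ : Δx < D + d) :
    volume {q : ℝ × ℝ | q.1 ^ 2 + q.2 ^ 2 < d ^ 2 ∧ (q.1 - Δx) ^ 2 + q.2 ^ 2 < D ^ 2}
      = ENNReal.ofReal
        (d ^ 2 * Real.arccos ((d ^ 2 + Δx ^ 2 - D ^ 2) / (2 * Δx * d)) +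
          D ^ 2 * Real.arccos ((D ^ 2 + Δx ^ 2 - d ^ 2) / (2 * Δx * D)) -
          (1 / 2) * Real.sqrt ((d + Δx + D) * (d + Δx - D) * (D + d - Δx) * (D + Δx - d))) := by
  have hΔ : 0 < Δx := lt_of_le_of_lt (abs_nonneg _) h₁
  have hD : 0 < D := lt_of_lt_of_le hd hdD
  obtain ⟨hab1, hab2⟩ := abs_lt.mp h₁
  -- hab1 : -Δx < D - d, hab2 : D - d < Δx
  set x₀ : ℝ := (d ^ 2 + Δx ^ 2 - D ^ 2) / (2 * Δx) with hx₀
  set x₁ : ℝ := (D ^ 2 + Δx ^ 2 - d ^ 2) / (2 * Δx) with hx₁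
  have h2Δ : 0 < 2 * Δx := by linarith
  have hx₀d : x₀ ≤ d := by
    rw [hx₀, div_le_iff₀ h2Δ]; nlinarith [mul_pos (by linarith : (0:ℝ) < D + d - Δx) (by linarith : (0:ℝ) < D - d + Δx)]
  have hx₀d' : -d ≤ x₀ := by
    rw [hx₀, le_div_iff₀ h2Δ]; nlinarith [mul_pos (by linarith : (0:ℝ) < Δx + d - D) (by linarith : (0:ℝ) < Δx + d + D)]
  have hx₁D : x₁ ≤ D := by
    rw [hx₁, div_le_iff₀ h2Δ]; nlinarith [mul_pos (by linarith : (0:ℝ) < d + D - Δx) (by linarith : (0:ℝ) < d - D + Δx)]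
  have hx₁D' : -D ≤ x₁ := by
    rw [hx₁, le_div_iff₀ h2Δ]; nlinarith [mul_pos (by linarith : (0:ℝ) < Δx + D - d) (by linarith : (0:ℝ) < Δx + D + d)]
  have hsum : x₀ + x₁ = Δx := by rw [hx₀, hx₁]; field_simp; ring
  have hax₀ : Δx - D ≤ x₀ := by linarith
  set f : ℝ → ℝ := fun x => 2 * Real.sqrt (min (d ^ 2 - x ^ 2) (D ^ 2 - (x - Δx) ^ 2)) with hf
  have hfc : Continuous f := by fun_prop
  have hfnn : ∀ x, 0 ≤ f x := fun x => by positivity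
  -- step 1: volume = lintegral of slices
  have hopen : IsOpen {q : ℝ × ℝ | q.1 ^ 2 + q.2 ^ 2 < d ^ 2 ∧ (q.1 - Δx) ^ 2 + q.2 ^ 2 < D ^ 2} := by
    exact IsOpen.and (isOpen_lt (by fun_prop) continuous_const)
      (isOpen_lt (by fun_prop) continuous_const)
  have hslice : ∀ x : ℝ, (Prod.mk x ⁻¹'
      {q : ℝ × ℝ | q.1 ^ 2 + q.2 ^ 2 < d ^ 2 ∧ (q.1 - Δx) ^ 2 + q.2 ^ 2 < D ^ 2})
      = Set.Ioo (-Real.sqrt (min (d ^ 2 - x ^ 2) (D ^ 2 - (x - Δx) ^ 2)))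
          (Real.sqrt (min (d ^ 2 - x ^ 2) (D ^ 2 - (x - Δx) ^ 2))) := by
    intro x
    ext y
    simp only [Set.mem_preimage, Set.mem_setOf_eq, Set.mem_Ioo, ← abs_lt]
    rw [Real.lt_sqrt (abs_nonneg y), sq_abs, lt_min_iff]
    constructor <;> intro h <;> constructor <;> nlinarith [h.1, h.2]
  have hvol1 : volume {q : ℝ × ℝ | q.1 ^ 2 + q.2 ^ 2 < d ^ 2 ∧ (q.1 - Δx) ^ 2 + q.2 ^ 2 < D ^ 2}
      = ∫⁻ x : ℝ, ENNReal.ofReal (f x) := by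
    rw [MeasureTheory.Measure.volume_eq_prod, MeasureTheory.Measure.prod_apply hopen.measurableSet]
    congr 1
    ext x
    rw [hslice x, Real.volume_Ioo, hf]
    congr 1
    ring
  -- step 2: integrability
  have hint : Integrable f := by
    apply hfc.integrable_of_hasCompactSupport
    apply HasCompactSupport.intro (isCompact_Icc (a := -d) (b := d))
    intro x hx
    simp only [Set.mem_Icc, not_and_or, not_le] at hx
    have hm : min (d ^ 2 - x ^ 2) (D ^ 2 - (x - Δx) ^ 2) ≤ 0 :=
      le_trans (min_le_left _ _) (by rcases hx with h | h <;> nlinarith)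
    rw [hf]; simp only [Real.sqrt_eq_zero'.mpr hm, mul_zero]
  have hvol2 : ∫⁻ x, ENNReal.ofReal (f x) = ENNReal.ofReal (∫ x, f x) :=
    (MeasureTheory.ofReal_integral_eq_lintegral_ofReal hint (ae_of_all _ hfnn)).symm
  -- step 3: reduce to an interval integral
  have hzero : ∀ x ∉ Set.Ioc (Δx - D) d, f x = 0 := by
    intro x hx
    simp only [Set.mem_Ioc, not_and_or, not_lt, not_le] at hx
    have hm : min (d ^ 2 - x ^ 2) (D ^ 2 - (x - Δx) ^ 2) ≤ 0 := by
      rcases hx with h | h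
      · exact le_trans (min_le_right _ _) (by nlinarith)
      · exact le_trans (min_le_left _ _) (by nlinarith)
    rw [hf]; simp only [Real.sqrt_eq_zero'.mpr hm, mul_zero]
  have hadb : Δx - D ≤ d := by linarith
  have hIoc : ∫ x, f x = ∫ x in (Δx - D)..d, f x := by
    rw [intervalIntegral.integral_of_le hadb]
    exact (setIntegral_eq_integral_of_forall_compl_eq_zero hzero).symm
  have hsplitint : (∫ x in (Δx - D)..x₀, f x) + (∫ x in x₀..d, f x)
      = ∫ x in (Δx - D)..d, f x :=
    intervalIntegral.integral_add_adjacent_intervals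
      (hfc.intervalIntegrable _ _) (hfc.intervalIntegrable _ _)
  -- piece 1
  have hp1 : ∫ x in (Δx - D)..x₀, f x
      = D ^ 2 * Real.arccos (x₁ / D) - x₁ * Real.sqrt (D ^ 2 - x₁ ^ 2) := by
    have hcong : Set.EqOn f (fun x => 2 * Real.sqrt (D ^ 2 - (x - Δx) ^ 2))
        (Set.uIcc (Δx - D) x₀) := by
      intro x hx
      rw [Set.uIcc_of_le hax₀] at hx
      have hle : 2 * Δx * x ≤ d ^ 2 + Δx ^ 2 - D ^ 2 := by
        have := (le_div_iff₀ h2Δ).mp hx.2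
        linarith
      rw [hf]
      simp only
      congr 1
      exact congrArg Real.sqrt (min_eq_right (by nlinarith))
    rw [intervalIntegral.integral_congr hcong,
      intervalIntegral.integral_comp_sub_right (fun x => 2 * Real.sqrt (D ^ 2 - x ^ 2)) Δx]
    have e1 : Δx - D - Δx = -D := by ring
    have e2 : x₀ - Δx = -x₁ := by rw [hx₀, hx₁]; field_simp; ring
    rw [e1, e2]
    have heven : Set.EqOn (fun x => 2 * Real.sqrt (D ^ 2 - x ^ 2))
        (fun x => (fun y => 2 * Real.sqrt (D ^ 2 - y ^ 2)) (-x)) (Set.uIcc (-D) (-x₁)) := by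
      intro x _; simp
    rw [intervalIntegral.integral_congr heven,
      intervalIntegral.integral_comp_neg (fun y => 2 * Real.sqrt (D ^ 2 - y ^ 2))]
    simp only [neg_neg]
    exact seg_integral D x₁ hD hx₁D' hx₁D
  -- piece 2
  have hp2 : ∫ x in x₀..d, f x
      = d ^ 2 * Real.arccos (x₀ / d) - x₀ * Real.sqrt (d ^ 2 - x₀ ^ 2) := by
    have hcong : Set.EqOn f (fun x => 2 * Real.sqrt (d ^ 2 - x ^ 2)) (Set.uIcc x₀ d) := by
      intro x hx
      rw [Set.uIcc_of_le hx₀d] at hx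
      have hle : d ^ 2 + Δx ^ 2 - D ^ 2 ≤ 2 * Δx * x := by
        have := (div_le_iff₀ h2Δ).mp hx.1
        linarith
      rw [hf]
      simp only
      congr 1
      exact congrArg Real.sqrt (min_eq_left (by nlinarith))
    rw [intervalIntegral.integral_congr hcong]
    exact seg_integral d x₀ hd hx₀d' hx₀d
  rw [hvol1, hvol2, hIoc, ← hsplitint, hp1, hp2]
  congr 1
  have hDd : D ^ 2 - x₁ ^ 2 = d ^ 2 - x₀ ^ 2 := by rw [hx₀, hx₁]; field_simp; ring
  have harg1 : x₀ / d = (d ^ 2 + Δx ^ 2 - D ^ 2) / (2 * Δx * d) := by rw [hx₀, div_div]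
  have harg2 : x₁ / D = (D ^ 2 + Δx ^ 2 - d ^ 2) / (2 * Δx * D) := by rw [hx₁, div_div]
  have hP : (d + Δx + D) * (d + Δx - D) * (D + d - Δx) * (D + Δx - d)
      = (2 * Δx) ^ 2 * (d ^ 2 - x₀ ^ 2) := by rw [hx₀]; field_simp; ring
  have hsqrtP : Real.sqrt ((d + Δx + D) * (d + Δx - D) * (D + d - Δx) * (D + Δx - d))
      = 2 * Δx * Real.sqrt (d ^ 2 - x₀ ^ 2) := by
    rw [hP, Real.sqrt_mul (sq_nonneg _), Real.sqrt_sq h2Δ.le]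
  rw [← harg1, ← harg2, hsqrtP, hDd, ← hsum]
  ring

/-- Area of the intersection of two disks of radii `d` and `D` (with `0 < d ≤ D`) whose
centers are a distance `Δx` apart, where `|D − d| < Δx < D + d`. -/
theorem area_inter_two_disks
    (d D Δx : ℝ) (hd : 0 < d) (hdD : d ≤ D)
    (h₁ : |D - d| < Δx) (h₂ : Δx < D + d)
    (c₁ c₂ : EuclideanSpace ℝ (Fin 2)) (hdist : dist c₁ c₂ = Δx) :
    volume (Metric.ball c₁ d ∩ Metric.ball c₂ D) =
      ENNReal.ofReal
        (d ^ 2 * Real.arccos ((d ^ 2 + Δx ^ 2 - D ^ 2) / (2 * Δx * d)) +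
          D ^ 2 * Real.arccos ((D ^ 2 + Δx ^ 2 - d ^ 2) / (2 * Δx * D)) -
          (1 / 2) * Real.sqrt ((d + Δx + D) * (d + Δx - D) * (D + d - Δx) * (D + Δx - d))) := by
  have hΔ : 0 < Δx := lt_of_le_of_lt (abs_nonneg _) h₁
  set w : EuclideanSpace ℝ (Fin 2) := c₂ - c₁ with hw
  have hnw : ‖w‖ = Δx := by
    rw [hw, ← dist_eq_norm, dist_comm]; exact hdist
  set p : EuclideanSpace ℝ (Fin 2) := EuclideanSpace.single (0 : Fin 2) Δx with hp
  have hnp : ‖p‖ = Δx := by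
    rw [hp, EuclideanSpace.norm_single, Real.norm_eq_abs, abs_of_pos hΔ]
  -- translation step
  have step1 : volume (Metric.ball c₁ d ∩ Metric.ball c₂ D)
      = volume (Metric.ball (0 : EuclideanSpace ℝ (Fin 2)) d ∩ Metric.ball w D) := by
    have hmp := measurePreserving_add_right (volume : Measure (EuclideanSpace ℝ (Fin 2))) c₁
    have hpre : (fun x : EuclideanSpace ℝ (Fin 2) => x + c₁) ⁻¹'
        (Metric.ball c₁ d ∩ Metric.ball c₂ D)
        = Metric.ball (0 : EuclideanSpace ℝ (Fin 2)) d ∩ Metric.ball w D := by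
      ext x
      simp only [Set.mem_preimage, Set.mem_inter_iff, Metric.mem_ball, dist_eq_norm, hw]
      have k1 : x + c₁ - c₁ = x - 0 := by abel
      have k2 : x + c₁ - c₂ = x - (c₂ - c₁) := by abel
      rw [k1, k2]
    rw [← hpre, hmp.measure_preimage (by measurability)]
  -- rotation step
  have step2 : volume (Metric.ball (0 : EuclideanSpace ℝ (Fin 2)) d ∩ Metric.ball w D)
      = volume (Metric.ball (0 : EuclideanSpace ℝ (Fin 2)) d ∩ Metric.ball p D) := by
    set e := Submodule.reflection (ℝ ∙ (w - p))ᗮ with he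
    have hewp : e w = p := Submodule.reflection_sub (by rw [hnw, hnp])
    have hpre : (e : EuclideanSpace ℝ (Fin 2) → EuclideanSpace ℝ (Fin 2)) ⁻¹'
        (Metric.ball (0 : EuclideanSpace ℝ (Fin 2)) d ∩ Metric.ball p D)
        = Metric.ball (0 : EuclideanSpace ℝ (Fin 2)) d ∩ Metric.ball w D := by
      ext x
      simp only [Set.mem_preimage, Set.mem_inter_iff, Metric.mem_ball]
      have h0 : dist (e x) 0 = dist x 0 := by
        conv_lhs => rw [show (0 : EuclideanSpace ℝ (Fin 2)) = e 0 by simp]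
        exact e.dist_map x 0
      have hpd : dist (e x) p = dist x w := by rw [← hewp]; exact e.dist_map x w
      rw [h0, hpd]
    rw [← hpre, e.measurePreserving.measure_preimage (by measurability)]
  -- coordinates step
  have step3 : volume (Metric.ball (0 : EuclideanSpace ℝ (Fin 2)) d ∩ Metric.ball p D)
      = volume {q : ℝ × ℝ | q.1 ^ 2 + q.2 ^ 2 < d ^ 2 ∧ (q.1 - Δx) ^ 2 + q.2 ^ 2 < D ^ 2} := by
    have hTmp : MeasurePreserving
        ((fun v : Fin 2 → ℝ => (MeasurableEquiv.toLp 2 (Fin 2 → ℝ)) v)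
          ∘ (fun q : ℝ × ℝ => (MeasurableEquiv.finTwoArrow : (Fin 2 → ℝ) ≃ᵐ ℝ × ℝ).symm q))
        volume volume :=
      ((EuclideanSpace.volume_preserving_symm_measurableEquiv_toLp (Fin 2)).symm).comp
        ((MeasureTheory.volume_preserving_finTwoArrow ℝ).symm)
    set T : ℝ × ℝ → EuclideanSpace ℝ (Fin 2) :=
      (fun v : Fin 2 → ℝ => (MeasurableEquiv.toLp 2 (Fin 2 → ℝ)) v)
        ∘ (fun q : ℝ × ℝ => (MeasurableEquiv.finTwoArrow : (Fin 2 → ℝ) ≃ᵐ ℝ × ℝ).symm q)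
      with hT
    have hTi : ∀ q : ℝ × ℝ, ∀ i : Fin 2, (T q) i = ![q.1, q.2] i := by
      intro q i; rfl
    have hball1 : ∀ q : ℝ × ℝ, (T q ∈ Metric.ball (0 : EuclideanSpace ℝ (Fin 2)) d
        ↔ q.1 ^ 2 + q.2 ^ 2 < d ^ 2) := by
      intro q
      rw [Metric.mem_ball, EuclideanSpace.dist_eq, Fin.sum_univ_two, Real.sqrt_lt' hd]
      simp [hTi q, Real.dist_eq, sq_abs]
    have hball2 : ∀ q : ℝ × ℝ, (T q ∈ Metric.ball p D
        ↔ (q.1 - Δx) ^ 2 + q.2 ^ 2 < D ^ 2) := by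
      intro q
      rw [Metric.mem_ball, EuclideanSpace.dist_eq, Fin.sum_univ_two,
        Real.sqrt_lt' (lt_of_lt_of_le hd hdD)]
      simp [hTi q, hp, Real.dist_eq, sq_abs, EuclideanSpace.single_apply]
    have hpre : T ⁻¹' (Metric.ball (0 : EuclideanSpace ℝ (Fin 2)) d ∩ Metric.ball p D)
        = {q : ℝ × ℝ | q.1 ^ 2 + q.2 ^ 2 < d ^ 2 ∧ (q.1 - Δx) ^ 2 + q.2 ^ 2 < D ^ 2} := by
      ext q
      simp only [Set.mem_preimage, Set.mem_inter_iff, Set.mem_setOf_eq, hball1 q, hball2 q]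
    rw [← hpre, hTmp.measure_preimage (by measurability)]
  rw [step1, step2, step3]
  exact lens_volume d D Δx hd hdD h₁ h₂
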